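/- Let G be a group that is nilpotent of class at most 3 (i.e. every triple commutator ⁅⁅x,y⁆,z⁆ lies in the center Z(G)). Then for all x, y, z ∈ G, the associator of the associated gyrogroup is given by (x∘y)∘z = ⁅⁅z⁻¹,y⁆,x⁆ · (x∘(y∘z)), where x∘y = y⁻¹xy² and ⁅u,v⁆ = uvu⁻¹v⁻¹; in particular every associator A(x,y,z) = ⁅⁅z⁻¹,y⁆,x⁆ lies in the center Z(G). -/

import Mathlib

open scoped commutatorElement

/-- The gyrogroup operation associated with a group: `x ∘ y = y⁻¹ * x * y²`. -/
def gyrOp {G : Type*} [Group G] (x y : G) : G := y⁻¹ * x * y ^ 2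

theorem associator_eq_triple_commutator {G : Type*} [Group G]
    (h3 : ∀ x y z : G, ⁅⁅x, y⁆, z⁆ ∈ Subgroup.center G) :
    ∀ x y z : G,
      gyrOp (gyrOp x y) z = ⁅⁅z⁻¹, y⁆, x⁆ * gyrOp x (gyrOp y z) ∧
      ⁅⁅z⁻¹, y⁆, x⁆ ∈ Subgroup.center G := by
  -- triple commutators commute with everything
  have hcomm : ∀ a b w g : G, g * ⁅⁅a, b⁆, w⁆ = ⁅⁅a, b⁆, w⁆ * g := fun a b w g =>
    (Subgroup.mem_center_iff.mp (h3 a b w)) g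
  -- `⁅⁅a,b⁆, ·⁆` is multiplicative
  have hmul : ∀ a b u v : G, ⁅⁅a, b⁆, u * v⁆ = ⁅⁅a, b⁆, u⁆ * ⁅⁅a, b⁆, v⁆ := by
    intro a b u v
    have h1 : ⁅⁅a, b⁆, u * v⁆ = ⁅⁅a, b⁆, u⁆ * (u * ⁅⁅a, b⁆, v⁆ * u⁻¹) := by
      simp only [commutatorElement_def]; group
    rw [h1, hcomm a b v u, mul_inv_cancel_right]
  have hinv : ∀ a b u : G, ⁅⁅a, b⁆, u⁻¹⁆ = ⁅⁅a, b⁆, u⁆⁻¹ := by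
    intro a b u
    have h1 := hmul a b u u⁻¹
    rw [mul_inv_cancel, commutatorElement_one_right] at h1
    exact eq_inv_of_mul_eq_one_right h1.symm
  intro x y z
  refine ⟨?_, h3 z⁻¹ y x⟩
  -- `⁅y,z⁆` and `⁅z,x⁆` commute
  have hab : ⁅y, z⁆ * ⁅z, x⁆ = ⁅z, x⁆ * ⁅y, z⁆ := by
    have h0 : ⁅⁅y, z⁆, ⁅z, x⁆⁆ = 1 := by
      rw [commutatorElement_def z x, hmul, hmul, hmul, hinv, hinv]
      rw [hcomm y z x ⁅⁅y, z⁆, z⁆]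
      group
    exact ((commutatorElement_eq_one_iff_commute).mp h0).eq
  -- rewrite the associator
  have hc : (⁅⁅z⁻¹, y⁆, x⁆ : G) = ⁅⁅y, z⁆, x⁆ := by
    have h1 : (⁅z⁻¹, y⁆ : G) = ⁅y, z⁆ * ⁅⁅z, y⁆, z⁻¹⁆ := by
      simp only [commutatorElement_def]; group
    have ht := hcomm z y z⁻¹ x
    calc ⁅⁅z⁻¹, y⁆, x⁆ = ⁅⁅y, z⁆ * ⁅⁅z, y⁆, z⁻¹⁆, x⁆ := by rw [h1]
      _ = ⁅y, z⁆ * (⁅⁅z, y⁆, z⁻¹⁆ * x) * ⁅⁅z, y⁆, z⁻¹⁆⁻¹ * ⁅y, z⁆⁻¹ * x⁻¹ := by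
          simp only [commutatorElement_def]; group
      _ = ⁅y, z⁆ * (x * ⁅⁅z, y⁆, z⁻¹⁆) * ⁅⁅z, y⁆, z⁻¹⁆⁻¹ * ⁅y, z⁆⁻¹ * x⁻¹ := by rw [← ht]
      _ = ⁅⁅y, z⁆, x⁆ := by simp only [commutatorElement_def]; group
  rw [hc]
  have hcc := hcomm y z x
  set c := (⁅⁅y, z⁆, x⁆ : G) with hcdef
  show gyrOp (gyrOp x y) z = c * gyrOp x (gyrOp y z)
  calc gyrOp (gyrOp x y) z
      = (y * z ^ 2)⁻¹ * (⁅y, z⁆ * ⁅z, x⁆ * x) * (z * y ^ 2 * z ^ 2) := by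
        simp only [gyrOp, commutatorElement_def]; group
    _ = (y * z ^ 2)⁻¹ * (⁅z, x⁆ * ⁅y, z⁆ * x) * (z * y ^ 2 * z ^ 2) := by rw [hab]
    _ = (y * z ^ 2)⁻¹ * (⁅z, x⁆ * (c * (x * ⁅y, z⁆))) * (z * y ^ 2 * z ^ 2) := by
        simp only [hcdef, commutatorElement_def]; group
    _ = (y * z ^ 2)⁻¹ * (c * (⁅z, x⁆ * (x * ⁅y, z⁆))) * (z * y ^ 2 * z ^ 2) := by
        rw [← mul_assoc ⁅z, x⁆ c, hcc ⁅z, x⁆]; group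
    _ = c * ((y * z ^ 2)⁻¹ * (⁅z, x⁆ * (x * ⁅y, z⁆)) * (z * y ^ 2 * z ^ 2)) := by
        rw [← mul_assoc ((y * z ^ 2)⁻¹) c, hcc ((y * z ^ 2)⁻¹)]
        group
    _ = c * gyrOp x (gyrOp y z) := by
        simp only [gyrOp, commutatorElement_def, pow_two]; group
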